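/- Let n ≥ 1, let u, w ∈ ℝⁿ satisfy ‖u‖₂ = ‖w‖₂ = √n, and let s ∈ {−1, 1} be such that s · (wᵀu) ≥ 0. Define the scaled Euclidean loss L = ‖w − s·u‖₂² / n. Then ‖P_w − P_u‖₂² = L · (1 − L/4), where P_u = u uᵀ / n and P_w = w wᵀ / n are the orthogonal projections onto the spans of u and w and ‖·‖₂ is the ℓ² operator norm. -/

import Mathlib

/-- The ℓ² operator norm of a real square matrix. -/
noncomputable def l2OpNorm {n : ℕ} (A : Matrix (Fin n) (Fin n) ℝ) : ℝ :=
  ‖Matrix.toEuclideanCLM (𝕜 := ℝ) A‖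

lemma vmv_mul {n : ℕ} (x y z t : Fin n → ℝ) :
    Matrix.vecMulVec x y * Matrix.vecMulVec z t
      = (∑ k, y k * z k) • Matrix.vecMulVec x t := by
  ext i j
  simp only [Matrix.mul_apply, Matrix.vecMulVec_apply, Matrix.smul_apply, smul_eq_mul,
    Finset.sum_mul]
  exact Finset.sum_congr rfl fun k _ => by ring

set_option maxHeartbeats 1000000 in
set_option synthInstance.maxHeartbeats 400000 in
lemma opnorm_sq_of_cube {n : ℕ} (A : Matrix (Fin n) (Fin n) ℝ) (μ : ℝ) (hμ : 0 ≤ μ)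
    (hstar : star A = A) (h3 : A * A * A = μ • A) (hz : A = 0 → μ = 0) :
    (l2OpNorm A) ^ 2 = μ := by
  let f := Matrix.toEuclideanCLM (𝕜 := ℝ) (n := Fin n)
  have hmul : ∀ X Y : Matrix (Fin n) (Fin n) ℝ, f (X * Y) = f X * f Y :=
    fun X Y => map_mul f X Y
  have hsmul : ∀ (c : ℝ) (X : Matrix (Fin n) (Fin n) ℝ), f (c • X) = c • f X :=
    fun c X => map_smul f c X
  set T : EuclideanSpace ℝ (Fin n) →L[ℝ] EuclideanSpace ℝ (Fin n) := f A with hT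
  have hT3 : T * T * T = μ • T := by
    rw [hT, ← hmul, ← hmul, h3, hsmul]
  have hTstar : star T = T := by
    rw [hT, ← map_star f A, hstar]
  have hn1 : ‖T‖ * ‖T‖ = ‖T * T‖ := by
    nth_rewrite 3 [← hTstar]
    exact (CStarRing.norm_star_mul_self).symm
  have hstarTT : star (T * T) = T * T := by rw [StarMul.star_mul, hTstar]
  have hn2 : ‖T * T‖ * ‖T * T‖ = ‖(T * T) * (T * T)‖ := by
    nth_rewrite 3 [← hstarTT]
    exact (CStarRing.norm_star_mul_self).symm
  have h4 : (A * A) * (A * A) = μ • (A * A) := by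
    rw [← mul_assoc, h3, smul_mul_assoc]
  have hT4 : (T * T) * (T * T) = μ • (T * T) := by
    rw [hT, ← hmul, ← hmul, h4, hsmul, hmul]
  have hn3 : ‖T * T‖ * ‖T * T‖ = μ * ‖T * T‖ := by
    rw [hn2, hT4]
    rw [norm_smul μ (T * T), Real.norm_eq_abs, abs_of_nonneg hμ]
  have hln : l2OpNorm A = ‖T‖ := rfl
  rcases eq_or_ne (‖T * T‖) 0 with h0 | h0
  · have hTnorm : ‖T‖ = 0 := by
      have h := hn1; rw [h0] at h
      exact mul_self_eq_zero.mp h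
    have hAzero : A = 0 := by
      have hTzero : f A = 0 := by rw [← hT]; exact norm_eq_zero.mp hTnorm
      have h0' : f (0 : Matrix (Fin n) (Fin n) ℝ) = 0 := map_zero f
      exact EquivLike.injective f (hTzero.trans h0'.symm)
    rw [hln, hz hAzero, sq, hTnorm, mul_zero]
  · have hTT : ‖T * T‖ = μ := mul_right_cancel₀ h0 hn3
    rw [hln, sq, hn1, hTT]

theorem stmt1 (n : ℕ) (hn : 1 ≤ n) (u w : EuclideanSpace ℝ (Fin n))
    (hu : ‖u‖ = Real.sqrt n) (hw : ‖w‖ = Real.sqrt n)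
    (s : ℝ) (hs : s = 1 ∨ s = -1) (hsign : 0 ≤ s * ∑ i, w i * u i) :
    (l2OpNorm ((n : ℝ)⁻¹ • Matrix.vecMulVec w w - (n : ℝ)⁻¹ • Matrix.vecMulVec u u)) ^ 2
      = (‖w - s • u‖ ^ 2 / n) * (1 - (‖w - s • u‖ ^ 2 / n) / 4) := by
  have hn0 : (n : ℝ) ≠ 0 := by positivity
  have hnn : (0:ℝ) ≤ n := Nat.cast_nonneg n
  set d : ℝ := ∑ i, w i * u i with hd
  -- inner products
  have hinner : (inner ℝ w u : ℝ) = d := by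
    simp [PiLp.inner_apply, RCLike.inner_apply, d]
    exact Finset.sum_congr rfl fun _ _ => mul_comm _ _
  have hinnw : (inner ℝ w w : ℝ) = (n:ℝ) := by
    rw [real_inner_self_eq_norm_sq, hw, Real.sq_sqrt hnn]
  have hinnu : (inner ℝ u u : ℝ) = (n:ℝ) := by
    rw [real_inner_self_eq_norm_sq, hu, Real.sq_sqrt hnn]
  have hwd : ∑ k, w k * w k = (n:ℝ) := by
    rw [← hinnw, PiLp.inner_apply]; simp only [RCLike.inner_apply, conj_trivial]
  have hud : ∑ k, u k * u k = (n:ℝ) := by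
    rw [← hinnu, PiLp.inner_apply]; simp only [RCLike.inner_apply, conj_trivial]
  have hwu : ∑ k, w k * u k = d := rfl
  have huw : ∑ k, u k * w k = d := by
    rw [← hwu]; exact Finset.sum_congr rfl fun k _ => mul_comm _ _
  -- Cauchy-Schwarz
  have hcs : d^2 ≤ (n:ℝ)^2 := by
    have h1 : |(inner ℝ w u : ℝ)| ≤ ‖w‖ * ‖u‖ := abs_real_inner_le_norm w u
    rw [hinner, hw, hu] at h1
    have h2 : Real.sqrt n * Real.sqrt n = (n:ℝ) := Real.mul_self_sqrt hnn
    rw [h2] at h1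
    have := abs_nonneg d
    nlinarith [le_abs_self d, neg_abs_le d, sq_abs d]
  set μ : ℝ := 1 - d^2 / (n:ℝ)^2 with hμdef
  have hμ0 : 0 ≤ μ := by
    rw [hμdef, sub_nonneg, div_le_one (by positivity)]; exact hcs
  set B : Matrix (Fin n) (Fin n) ℝ := Matrix.vecMulVec w w - Matrix.vecMulVec u u with hB
  set A : Matrix (Fin n) (Fin n) ℝ :=
    (n : ℝ)⁻¹ • Matrix.vecMulVec w w - (n : ℝ)⁻¹ • Matrix.vecMulVec u u with hA
  have hAB : A = (n:ℝ)⁻¹ • B := by rw [hA, hB, smul_sub]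
  have hB3 : B * B * B = ((n:ℝ)^2 - d^2) • B := by
    rw [hB]
    simp only [sub_mul, mul_sub, vmv_mul, smul_mul_assoc, mul_smul_comm, hwd, hud, hwu, huw]
    module
  have hA3 : A * A * A = μ • A := by
    have hsc : (1 - d^2/(n:ℝ)^2) = (n:ℝ)⁻¹ * ((n:ℝ)⁻¹ * ((n:ℝ)^2 - d^2)) := by
      field_simp
    rw [hAB]
    simp only [smul_mul_assoc, mul_smul_comm, hB3, smul_smul]
    rw [hμdef, hsc]
    match_scalars <;> ring
  have hAstar : star A = A := by
    rw [hA]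
    ext i j
    simp [Matrix.star_apply, Matrix.vecMulVec_apply, mul_comm]
  have hz : A = 0 → μ = 0 := by
    intro hAzero
    have hBzero : Matrix.vecMulVec w w = Matrix.vecMulVec u u := by
      have h1 : (n:ℝ)⁻¹ • B = 0 := by rw [← hAB, hAzero]
      have h2 : B = 0 := by
        rcases smul_eq_zero.mp h1 with h | h
        · exact absurd h (inv_ne_zero hn0)
        · exact h
      rw [hB] at h2
      exact sub_eq_zero.mp h2
    have hvv : ∀ i j, w i * w j = u i * u j := by
      intro i j
      have h := congrFun (congrFun hBzero i) j
      simpa [Matrix.vecMulVec_apply] using h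
    have hd2 : d^2 = (n:ℝ)^2 := by
      have h1 : d * d = ∑ i, ∑ j, (w i * u i) * (w j * u j) := by
        rw [hd, Finset.sum_mul_sum]
      have h2 : d * d = ∑ i, ∑ j, (u i * u j) * (u i * u j) := by
        rw [h1]
        refine Finset.sum_congr rfl fun i _ => Finset.sum_congr rfl fun j _ => ?_
        rw [show w i * u i * (w j * u j) = (w i * w j) * (u i * u j) by ring, hvv i j]
      have h3 : (∑ i, ∑ j, (u i * u j) * (u i * u j))
          = (∑ i, u i * u i) * (∑ j, u j * u j) := by
        rw [Finset.sum_mul_sum]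
        exact Finset.sum_congr rfl fun i _ => Finset.sum_congr rfl fun j _ => by ring
      rw [h3, hud] at h2
      rw [sq, sq, h2]
    rw [hμdef, hd2]
    field_simp
    norm_num
  have key : (l2OpNorm A) ^ 2 = μ := opnorm_sq_of_cube A μ hμ0 hAstar hA3 hz
  rw [key]
  -- RHS arithmetic
  have hs2 : s ^ 2 = 1 := by rcases hs with h | h <;> rw [h] <;> norm_num
  have hnormsq : ‖w - s • u‖ ^ 2 = 2 * n - 2 * s * d := by
    rw [norm_sub_sq_real, real_inner_smul_right, hinner, norm_smul, Real.norm_eq_abs,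
      mul_pow, sq_abs, hw, Real.sq_sqrt hnn, hu, Real.sq_sqrt hnn]
    linear_combination (n:ℝ) * hs2
  rw [hnormsq, hμdef]
  field_simp
  ring_nf
  linear_combination (4 * d^2) * hs2
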